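/- Let G = (V1 ∪ V2, E) be a bipartite graph with |V1| = n1 and |V2| = n2. The multiset of eigenvalues of the semi-double graph G^{2V1} is exactly {√2·λ : λ eigenvalue of G (with multiplicity)} together with the eigenvalue 0 with additional multiplicity n1. -/

import Mathlib

open Matrix
open Polynomial

section aux
variable {n : Type*} [Fintype n] [DecidableEq n] {R : Type*} [CommRing R]

lemma my_charpoly_conj (U V A : Matrix n n R) (hUV : U * V = 1) (hVU : V * U = 1) :
    (U * A * V).charpoly = A.charpoly := by
  have key : charmatrix (U * A * V) = (U.map C) * charmatrix A * (V.map C) := by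
    rw [charmatrix, charmatrix]
    have hs : Matrix.scalar n (X : R[X]) = (X : R[X]) • (1 : Matrix n n R[X]) := by
      rw [Matrix.smul_one_eq_diagonal]; rfl
    rw [mul_sub, sub_mul, hs]
    have h1 : (U.map C) * ((X : R[X]) • (1 : Matrix n n R[X])) * (V.map C)
        = (X : R[X]) • (1 : Matrix n n R[X]) := by
      rw [mul_smul_comm, smul_mul_assoc, mul_one, ← Matrix.map_mul, hUV]
      simp
    rw [h1]
    congr 1
    simp only [RingHom.mapMatrix_apply]
    rw [← Matrix.map_mul, ← Matrix.map_mul]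
  rw [Matrix.charpoly, Matrix.charpoly, key, det_mul, det_mul]
  have : (U.map C).det * (V.map C).det = 1 := by
    rw [← det_mul, ← Matrix.map_mul, hUV]
    simp
  calc (U.map C).det * (charmatrix A).det * (V.map C).det
      = (U.map C).det * (V.map C).det * (charmatrix A).det := by ring
    _ = (charmatrix A).det := by rw [this, one_mul]

lemma my_charpoly_diagonal (d : n → R) :
    (Matrix.diagonal d).charpoly = ∏ i, (X - C (d i)) := by
  have h : charmatrix (Matrix.diagonal d) = Matrix.diagonal fun i => X - C (d i) := by
    ext i j
    by_cases hij : i = j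
    · subst hij; simp [charmatrix_apply_eq, Matrix.diagonal_apply_eq]
    · simp [charmatrix_apply_ne _ _ _ hij, Matrix.diagonal_apply_ne _ hij]
  rw [Matrix.charpoly, h, det_diagonal]

lemma my_charpoly_smul_hermitian {A : Matrix n n ℝ} (hA : A.IsHermitian) (c : ℝ) :
    (c • A).charpoly = ∏ i, (X - C (c * hA.eigenvalues i)) := by
  have hU1 : (hA.eigenvectorUnitary : Matrix n n ℝ) * star (hA.eigenvectorUnitary : Matrix n n ℝ) = 1 :=
    Matrix.mem_unitaryGroup_iff.mp hA.eigenvectorUnitary.2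
  have hU2 : star (hA.eigenvectorUnitary : Matrix n n ℝ) * (hA.eigenvectorUnitary : Matrix n n ℝ) = 1 :=
    Matrix.mem_unitaryGroup_iff'.mp hA.eigenvectorUnitary.2
  have h := hA.spectral_theorem
  have hD : c • A = (hA.eigenvectorUnitary : Matrix n n ℝ) *
      Matrix.diagonal (fun i => c * hA.eigenvalues i) *
      star (hA.eigenvectorUnitary : Matrix n n ℝ) := by
    have hd : Matrix.diagonal (fun i => c * hA.eigenvalues i)
        = c • Matrix.diagonal (RCLike.ofReal ∘ hA.eigenvalues) := by
      ext i j
      by_cases hij : i = j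
      · subst hij; simp [Matrix.diagonal_apply_eq]
      · simp [Matrix.diagonal_apply_ne _ hij]
    conv_lhs => rw [h]
    rw [Unitary.conjStarAlgAut_apply, hd, mul_smul_comm, smul_mul_assoc]
  rw [hD, my_charpoly_conj _ _ _ hU1 hU2, my_charpoly_diagonal]

end aux



/-- The multiset of eigenvalues of the semi-double graph `G^{2V1}`
(whose adjacency matrix is `[[0,0,N],[0,0,N],[Nᵀ,Nᵀ,0]]`) is exactly
`{√2·λ : λ eigenvalue of G}` (with multiplicity) together with `0` with additional
multiplicity `n1`, where the adjacency matrix of `G` is `[[0,N],[Nᵀ,0]]`. -/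
theorem stmt_12 {n1 n2 : ℕ} (N : Matrix (Fin n1) (Fin n2) ℝ) :
    (Matrix.charpoly (Matrix.fromBlocks 0
        (Matrix.of fun (i : Fin n1 ⊕ Fin n1) j => N (i.elim id id) j)
        (Matrix.of fun (i : Fin n1 ⊕ Fin n1) j => N (i.elim id id) j)ᵀ 0)).roots =
      Multiset.replicate n1 0 +
        (Matrix.charpoly (Matrix.fromBlocks 0 N Nᵀ 0)).roots.map
          (fun lam => Real.sqrt 2 * lam) := by
  classical
  have hsq : Real.sqrt 2 * Real.sqrt 2 = 2 := Real.mul_self_sqrt (by norm_num)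
  set M : Matrix (Fin n1 ⊕ Fin n1) (Fin n2) ℝ :=
    Matrix.of fun (i : Fin n1 ⊕ Fin n1) j => N (i.elim id id) j with hM
  have hMrows : M = Matrix.fromRows N N := by
    ext i j; cases i <;> rfl
  set B : Matrix (Fin n1 ⊕ Fin n2) (Fin n1 ⊕ Fin n2) ℝ := Matrix.fromBlocks 0 N Nᵀ 0 with hB
  set A : Matrix ((Fin n1 ⊕ Fin n1) ⊕ Fin n2) ((Fin n1 ⊕ Fin n1) ⊕ Fin n2) ℝ :=
    Matrix.fromBlocks 0 M Mᵀ 0 with hA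
  have hBherm : B.IsHermitian := by
    rw [Matrix.IsHermitian]
    ext i j
    cases i <;> cases j <;>
      simp [hB, Matrix.conjTranspose_apply, Matrix.fromBlocks]
  set S : Matrix (Fin n1 ⊕ Fin n1) (Fin n1 ⊕ Fin n1) ℝ := Matrix.fromBlocks 1 1 1 (-1) with hS
  set Q : Matrix ((Fin n1 ⊕ Fin n1) ⊕ Fin n2) ((Fin n1 ⊕ Fin n1) ⊕ Fin n2) ℝ :=
    Matrix.fromBlocks S 0 0 (Real.sqrt 2 • (1 : Matrix (Fin n2) (Fin n2) ℝ)) with hQ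
  set Q' : Matrix ((Fin n1 ⊕ Fin n1) ⊕ Fin n2) ((Fin n1 ⊕ Fin n1) ⊕ Fin n2) ℝ :=
    Matrix.fromBlocks ((1/2 : ℝ) • S) 0 0
      ((Real.sqrt 2 / 2) • (1 : Matrix (Fin n2) (Fin n2) ℝ)) with hQ'
  set C1 : Matrix ((Fin n1 ⊕ Fin n1) ⊕ Fin n2) ((Fin n1 ⊕ Fin n1) ⊕ Fin n2) ℝ :=
    Matrix.fromBlocks 0 (Matrix.fromRows (Real.sqrt 2 • N) 0)
      (Matrix.fromCols (Real.sqrt 2 • Nᵀ) 0) 0 with hC1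
  have hSS : S * S = (2 : ℝ) • (1 : Matrix (Fin n1 ⊕ Fin n1) (Fin n1 ⊕ Fin n1) ℝ) := by
    rw [hS, Matrix.fromBlocks_multiply]
    rw [Matrix.smul_one_eq_diagonal]
    ext i j
    cases i <;> cases j <;>
      simp [Matrix.fromBlocks, Matrix.diagonal, Matrix.one_apply, Sum.elim_inl, Sum.elim_inr,
        two_mul] <;> split <;> simp_all [Matrix.one_apply] <;> ring
  have hQQ' : Q * Q' = 1 := by
    rw [hQ, hQ', Matrix.fromBlocks_multiply]
    have h1 : S * ((1/2 : ℝ) • S) = 1 := by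
      rw [Matrix.mul_smul, hSS, smul_smul]; norm_num
    have h2 : (Real.sqrt 2 • (1 : Matrix (Fin n2) (Fin n2) ℝ)) *
        ((Real.sqrt 2 / 2) • (1 : Matrix (Fin n2) (Fin n2) ℝ)) = 1 := by
      rw [Matrix.smul_mul, Matrix.mul_smul, smul_smul, one_mul]
      rw [show Real.sqrt 2 * (Real.sqrt 2 / 2) = 1 by rw [mul_div_assoc'] ; rw [hsq]; norm_num]
      simp
    simp [h1, h2, Matrix.fromBlocks_one]
    rw [hSS, smul_smul]
    norm_num [Matrix.fromBlocks_one]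
  have hQ'Q : Q' * Q = 1 := by
    rw [hQ, hQ', Matrix.fromBlocks_multiply]
    have h1 : ((1/2 : ℝ) • S) * S = 1 := by
      rw [Matrix.smul_mul, hSS, smul_smul]; norm_num
    have h2 : ((Real.sqrt 2 / 2) • (1 : Matrix (Fin n2) (Fin n2) ℝ)) *
        (Real.sqrt 2 • (1 : Matrix (Fin n2) (Fin n2) ℝ)) = 1 := by
      rw [Matrix.smul_mul, Matrix.mul_smul, smul_smul, one_mul]
      rw [show Real.sqrt 2 / 2 * Real.sqrt 2 = 1 by rw [div_mul_eq_mul_div, hsq]; norm_num]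
      simp
    simp [h1, h2, Matrix.fromBlocks_one]
    rw [hSS, smul_smul]
    norm_num [Matrix.fromBlocks_one]
  have hcomm : Q * C1 = A * Q := by
    rw [hQ, hC1, hA, Matrix.fromBlocks_multiply, Matrix.fromBlocks_multiply]
    have hTR : S * Matrix.fromRows (Real.sqrt 2 • N) (0 : Matrix (Fin n1) (Fin n2) ℝ)
        = M * (Real.sqrt 2 • (1 : Matrix (Fin n2) (Fin n2) ℝ)) := by
      rw [hS, Matrix.fromBlocks_mul_fromRows, hMrows]
      ext i j
      cases i <;> simp [Matrix.mul_smul, Matrix.one_mul, Matrix.mul_one]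
    have hBL : (Real.sqrt 2 • (1 : Matrix (Fin n2) (Fin n2) ℝ)) *
        Matrix.fromCols (Real.sqrt 2 • Nᵀ) (0 : Matrix (Fin n2) (Fin n1) ℝ)
        = Mᵀ * S := by
      rw [hMrows, Matrix.transpose_fromRows, hS, Matrix.fromCols_mul_fromBlocks]
      ext i j
      cases j <;>
        simp [Matrix.smul_mul, Matrix.mul_one, smul_smul, hsq, two_mul,
          ← mul_assoc]
    simp [hTR, hBL]
  have hA_eq : A = Q * C1 * Q' := by
    calc A = A * (Q * Q') := by rw [hQQ', mul_one]
      _ = (A * Q) * Q' := by rw [mul_assoc]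
      _ = Q * C1 * Q' := by rw [hcomm]
  have h1 : A.charpoly = C1.charpoly := by
    rw [hA_eq, my_charpoly_conj _ _ _ hQQ' hQ'Q]
  let e : ((Fin n1 ⊕ Fin n1) ⊕ Fin n2) ≃ ((Fin n1 ⊕ Fin n2) ⊕ Fin n1) :=
    (Equiv.sumAssoc _ _ _).trans ((Equiv.sumCongr (Equiv.refl _) (Equiv.sumComm _ _)).trans
      (Equiv.sumAssoc _ _ _).symm)
  have h2 : (Matrix.reindex e e C1) =
      Matrix.fromBlocks (Real.sqrt 2 • B) 0 0 (0 : Matrix (Fin n1) (Fin n1) ℝ) := by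
    ext i j
    rcases i with (a | c) | b <;> rcases j with (a' | c') | b' <;>
      simp [hC1, hB, e, Matrix.fromBlocks,
        Equiv.sumAssoc, Equiv.sumComm, Equiv.sumCongr]
  have h3 : C1.charpoly = (Real.sqrt 2 • B).charpoly *
      (0 : Matrix (Fin n1) (Fin n1) ℝ).charpoly := by
    rw [← Matrix.charpoly_reindex e C1, h2, Matrix.charpoly_fromBlocks_zero₁₂]
  have h0 : (0 : Matrix (Fin n1) (Fin n1) ℝ).charpoly = X ^ n1 := by
    have hd := my_charpoly_diagonal (fun _ : Fin n1 => (0 : ℝ))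
    simpa using hd
  have hsm := my_charpoly_smul_hermitian hBherm (Real.sqrt 2)
  have hone := my_charpoly_smul_hermitian hBherm 1
  rw [one_smul] at hone
  simp only [one_mul] at hone
  have roots_prod : ∀ f : (Fin n1 ⊕ Fin n2) → ℝ,
      (∏ i, (X - C (f i))).roots = Finset.univ.val.map f := by
    intro f
    have hp : (∏ i, (X - C (f i))) =
        ((Finset.univ.val.map f).map fun a => X - C a).prod := by
      rw [Multiset.map_map]; rfl
    rw [hp, Polynomial.roots_multiset_prod_X_sub_C]
  have hne : (Real.sqrt 2 • B).charpoly * (0 : Matrix (Fin n1) (Fin n1) ℝ).charpoly ≠ 0 := by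
    rw [hsm, h0]
    apply mul_ne_zero
    · exact Finset.prod_ne_zero_iff.mpr fun i _ => Polynomial.X_sub_C_ne_zero _
    · exact pow_ne_zero _ Polynomial.X_ne_zero
  rw [h1, h3, Polynomial.roots_mul hne, hsm, h0, roots_prod, Polynomial.roots_pow,
    Polynomial.roots_X, hone, roots_prod, Multiset.map_map, Multiset.nsmul_singleton]
  rw [add_comm]
  rfl
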